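/- For the alphabet A = {0, 1, 4, 5} and base β = 8/3, the only unique expansions over A are the constant sequences 0,0,0,… and 5,5,5,…; that is, every x ∈ (0, 5/(β−1)) with an expansion other than all-zeros or all-fives has at least two distinct β-expansions over A. -/

import Mathlib

lemma pow_div_eq (c : ℝ) (n : ℕ) : c / ((8:ℝ)/3)^n = c * (3/8)^n := by
  rw [div_eq_mul_inv, ← inv_pow]; norm_num

lemma summable_aux {w : ℕ → ℝ} (h : ∀ k, 0 ≤ w k ∧ w k ≤ 5) :
    Summable (fun k => w k / ((8:ℝ)/3)^(k+1)) := by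
  have hg : Summable (fun k : ℕ => (15/8 : ℝ) * (3/8)^k) :=
    (summable_geometric_of_lt_one (by norm_num) (by norm_num)).mul_left _
  refine Summable.of_nonneg_of_le (fun k => ?_) (fun k => ?_) hg
  · have := (h k).1; positivity
  · rw [pow_div_eq]
    calc w k * (3/8)^(k+1) ≤ 5 * (3/8)^(k+1) := by
          apply mul_le_mul_of_nonneg_right (h k).2; positivity
      _ = (15/8) * (3/8)^k := by rw [pow_succ]; ring

lemma geom_val : ∑' k : ℕ, (15/8 : ℝ) * (3/8)^k = 3 := by
  rw [tsum_mul_left, tsum_geometric_of_lt_one (by norm_num) (by norm_num)]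
  norm_num

noncomputable def tailSum (u : ℕ → ℝ) (m : ℕ) : ℝ := ∑' j : ℕ, u (m + j) / ((8:ℝ)/3)^(j+1)

lemma term_eq {w : ℕ → ℝ} (h : ∀ k, 0 ≤ w k ∧ w k ≤ 5) (k : ℕ) :
    w k / ((8:ℝ)/3)^(k+1) ≤ (15/8 : ℝ) * (3/8)^k := by
  rw [pow_div_eq]
  calc w k * (3/8)^(k+1) ≤ 5 * (3/8)^(k+1) := by
        apply mul_le_mul_of_nonneg_right (h k).2; positivity
    _ = (15/8) * (3/8)^k := by rw [pow_succ]; ring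

lemma tail_nonneg {u : ℕ → ℝ} (h : ∀ k, 0 ≤ u k ∧ u k ≤ 5) (m : ℕ) : 0 ≤ tailSum u m := by
  refine tsum_nonneg fun j => ?_
  have := (h (m + j)).1; positivity

lemma tail_le3 {u : ℕ → ℝ} (h : ∀ k, 0 ≤ u k ∧ u k ≤ 5) (m : ℕ) : tailSum u m ≤ 3 := by
  have hs : Summable (fun j => u (m + j) / ((8:ℝ)/3)^(j+1)) := summable_aux (fun j => h (m+j))
  have hg : Summable (fun k : ℕ => (15/8 : ℝ) * (3/8)^k) :=
    (summable_geometric_of_lt_one (by norm_num) (by norm_num)).mul_left _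
  calc tailSum u m ≤ ∑' k : ℕ, (15/8 : ℝ) * (3/8)^k :=
        Summable.tsum_le_tsum (fun k => term_eq (fun j => h (m+j)) k) hs hg
    _ = 3 := geom_val

lemma tail_rec {u : ℕ → ℝ} (h : ∀ k, 0 ≤ u k ∧ u k ≤ 5) (m : ℕ) :
    tailSum u m = u m * (3/8) + (3/8) * tailSum u (m+1) := by
  have hs : Summable (fun j => u (m + j) / ((8:ℝ)/3)^(j+1)) := summable_aux (fun j => h (m+j))
  rw [tailSum, Summable.tsum_eq_zero_add hs]
  congr 1
  · rw [pow_div_eq]; norm_num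
  · have he : ∀ j : ℕ, u (m + (j + 1)) / ((8:ℝ)/3)^(j+1+1)
        = (3/8) * (u (m + 1 + j) / ((8:ℝ)/3)^(j+1)) := by
      intro j
      have : m + (j + 1) = m + 1 + j := by omega
      rw [this, pow_div_eq, pow_div_eq, pow_succ]
      ring
    rw [tsum_congr he, tsum_mul_left, tailSum]

lemma tail_const5 {u : ℕ → ℝ} (m : ℕ) (h : ∀ j, u (m + j) = 5) : tailSum u m = 3 := by
  rw [tailSum, tsum_congr (f := fun j => u (m+j) / ((8:ℝ)/3)^(j+1))
    (g := fun j => (15/8 : ℝ) * (3/8)^j)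
    (fun j => by rw [h j, pow_div_eq, pow_succ]; ring)]
  exact geom_val

lemma tail_const0 {u : ℕ → ℝ} (m : ℕ) (h : ∀ j, u (m + j) = 0) : tailSum u m = 0 := by
  rw [tailSum, tsum_congr (f := fun j => u (m+j) / ((8:ℝ)/3)^(j+1))
    (g := fun _ => (0:ℝ)) (fun j => by rw [h j]; simp)]
  exact tsum_zero

lemma tail_split {u : ℕ → ℝ} (h : ∀ k, 0 ≤ u k ∧ u k ≤ 5) (n : ℕ) :
    (∑' k : ℕ, u k / ((8:ℝ)/3)^(k+1))
      = (∑ j ∈ Finset.range n, u j / ((8:ℝ)/3)^(j+1)) + (3/8)^n * tailSum u n := by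
  have hs : Summable (fun k => u k / ((8:ℝ)/3)^(k+1)) := summable_aux h
  rw [← hs.sum_add_tsum_nat_add n]
  congr 1
  have he : ∀ j : ℕ, u (j + n) / ((8:ℝ)/3)^(j + n + 1)
      = (3/8)^n * (u (n + j) / ((8:ℝ)/3)^(j+1)) := by
    intro j
    have h1 : j + n = n + j := by omega
    rw [h1, pow_div_eq, pow_div_eq]
    rw [show n + j + 1 = (j+1) + n by omega, pow_add]
    ring
  rw [tsum_congr he, tsum_mul_left, tailSum]

noncomputable def gD (x : ℝ) : ℝ := if x < 3/8 then 0 else if x < 3/2 then 1 else if x < 15/8 then 4 else 5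
noncomputable def gT (x : ℝ) : ℝ := (8/3)*x - gD x
noncomputable def gR (x : ℝ) (n : ℕ) : ℝ := gT^[n] x

lemma gD_mem (x : ℝ) : gD x = 0 ∨ gD x = 1 ∨ gD x = 4 ∨ gD x = 5 := by
  unfold gD; split_ifs <;> simp

lemma gT_bounds {x : ℝ} (h0 : 0 ≤ x) (h3 : x ≤ 3) : 0 ≤ gT x ∧ gT x ≤ 3 := by
  unfold gT gD; split_ifs with h1 h2 h3' <;> constructor <;> linarith

lemma gR_bounds {x : ℝ} (h0 : 0 ≤ x) (h3 : x ≤ 3) : ∀ n, 0 ≤ gR x n ∧ gR x n ≤ 3 := by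
  intro n
  induction n with
  | zero => exact ⟨h0, h3⟩
  | succ n ih =>
    have : gR x (n+1) = gT (gR x n) := Function.iterate_succ_apply' gT n x
    rw [this]
    exact gT_bounds ih.1 ih.2

lemma gR_partial {x : ℝ} : ∀ n : ℕ,
    ∑ j ∈ Finset.range n, gD (gR x j) / ((8:ℝ)/3)^(j+1) = x - gR x n / ((8:ℝ)/3)^n := by
  intro n
  induction n with
  | zero => simp [gR]
  | succ n ih =>
    rw [Finset.sum_range_succ, ih]
    have hstep : gR x (n+1) = (8/3) * gR x n - gD (gR x n) :=
      Function.iterate_succ_apply' gT n x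
    rw [hstep, pow_div_eq, pow_div_eq, pow_div_eq, pow_succ]
    ring

lemma greedy (x : ℝ) (h0 : 0 ≤ x) (h3 : x ≤ 3) :
    ∃ w : ℕ → ℝ, (∀ k, w k = 0 ∨ w k = 1 ∨ w k = 4 ∨ w k = 5) ∧
      x = ∑' k : ℕ, w k / ((8:ℝ)/3)^(k+1) := by
  refine ⟨fun n => gD (gR x n), fun k => gD_mem _, ?_⟩
  have hb : ∀ k, 0 ≤ gD (gR x k) ∧ gD (gR x k) ≤ 5 := by
    intro k; rcases gD_mem (gR x k) with h|h|h|h <;> rw [h] <;> norm_num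
  have hs : Summable (fun k => gD (gR x k) / ((8:ℝ)/3)^(k+1)) := summable_aux hb
  have h1 : Filter.Tendsto (fun n => ∑ j ∈ Finset.range n, gD (gR x j) / ((8:ℝ)/3)^(j+1))
      Filter.atTop (nhds (∑' k : ℕ, gD (gR x k) / ((8:ℝ)/3)^(k+1))) :=
    hs.hasSum.tendsto_sum_nat
  have h2 : Filter.Tendsto (fun n => ∑ j ∈ Finset.range n, gD (gR x j) / ((8:ℝ)/3)^(j+1))
      Filter.atTop (nhds x) := by
    have hg : Filter.Tendsto (fun n : ℕ => gR x n / ((8:ℝ)/3)^n) Filter.atTop (nhds 0) := by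
      have hgeo : Filter.Tendsto (fun n : ℕ => (3:ℝ) * (3/8)^n) Filter.atTop (nhds 0) := by
        have := tendsto_pow_atTop_nhds_zero_of_lt_one (by norm_num : (0:ℝ) ≤ 3/8) (by norm_num)
        simpa using this.const_mul (3:ℝ)
      refine squeeze_zero (fun n => ?_) (fun n => ?_) hgeo
      · have := (gR_bounds h0 h3 n).1; positivity
      · rw [pow_div_eq]
        apply mul_le_mul_of_nonneg_right (gR_bounds h0 h3 n).2
        positivity
    have : (fun n : ℕ => x - gR x n / ((8:ℝ)/3)^n) = fun n =>
        ∑ j ∈ Finset.range n, gD (gR x j) / ((8:ℝ)/3)^(j+1) := by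
      funext n; rw [gR_partial]
    rw [← this]
    simpa using (tendsto_const_nhds (x := x)).sub hg
  exact (tendsto_nhds_unique h2 h1)

/-- over A = {0,1,4,5} in base β = 8/3, the only unique expansions are
0,0,0,… and 5,5,5,…; every other x ∈ (0, 5/(β−1)) with an expansion has at least two. -/
theorem stmt_4 :
    ∀ x : ℝ, 0 < x → x < 5 / ((8 : ℝ) / 3 - 1) →
      ∀ u : ℕ → ℝ, (∀ k, u k = 0 ∨ u k = 1 ∨ u k = 4 ∨ u k = 5) →
        x = (∑' k : ℕ, u k / ((8 : ℝ) / 3) ^ (k + 1)) →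
        u ≠ (fun _ => 0) → u ≠ (fun _ => 5) →
        ∃ v : ℕ → ℝ, (∀ k, v k = 0 ∨ v k = 1 ∨ v k = 4 ∨ v k = 5) ∧ v ≠ u ∧
          x = ∑' k : ℕ, v k / ((8 : ℝ) / 3) ^ (k + 1) := by
  intro x hx0 hx3 u hu hxeq hu0 hu5
  have hub : ∀ k, 0 ≤ u k ∧ u k ≤ 5 := by
    intro k; rcases hu k with h|h|h|h <;> rw [h] <;> norm_num
  set r : ℕ → ℝ := tailSum u with hr
  have hr0 : ∀ m, 0 ≤ r m := tail_nonneg hub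
  have hr3 : ∀ m, r m ≤ 3 := tail_le3 hub
  have hrrec : ∀ m, r m = u m * (3/8) + (3/8) * r (m+1) := tail_rec hub
  by_cases hswap : ∃ k, ∃ a : ℝ, (a = 0 ∨ a = 1 ∨ a = 4 ∨ a = 5) ∧ a ≠ u k ∧
      0 ≤ r (k+1) + (u k - a) ∧ r (k+1) + (u k - a) ≤ 3
  · -- construct the second expansion
    obtain ⟨k, a, hadig, hane, ht0, ht3⟩ := hswap
    obtain ⟨w, hwdig, hwsum⟩ := greedy (r (k+1) + (u k - a)) ht0 ht3
    refine ⟨fun j => if j < k then u j else if j = k then a else w (j - (k+1)), ?_, ?_, ?_⟩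
    · intro j
      dsimp only
      split_ifs
      · exact hu j
      · exact hadig
      · exact hwdig _
    · intro h
      have hvk : (fun j => if j < k then u j else if j = k then a else w (j - (k+1))) k = a := by
        simp
      exact hane (hvk ▸ congrFun h k)
    · set v : ℕ → ℝ := fun j => if j < k then u j else if j = k then a else w (j - (k+1)) with hv
      have hvb : ∀ j, 0 ≤ v j ∧ v j ≤ 5 := by
        intro j
        have : v j = 0 ∨ v j = 1 ∨ v j = 4 ∨ v j = 5 := by
          rw [hv]; dsimp only; split_ifs
          · exact hu j
          · exact hadig
          · exact hwdig _
        rcases this with h|h|h|h <;> rw [h] <;> norm_num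
      have hvsplit := tail_split hvb (k+1)
      have husplit := tail_split hub (k+1)
      have hvt : tailSum v (k+1) = r (k+1) + (u k - a) := by
        rw [tailSum, tsum_congr (f := fun j => v (k+1+j) / ((8:ℝ)/3)^(j+1))
          (g := fun j => w j / ((8:ℝ)/3)^(j+1)) ?_]
        · exact hwsum.symm
        · intro j
          congr 1
          rw [hv]
          dsimp only
          rw [if_neg (by omega), if_neg (by omega)]
          congr 1
          omega
      rw [hxeq, hvsplit, husplit, hvt]
      rw [Finset.sum_range_succ, Finset.sum_range_succ]
      have hsum_eq : ∑ j ∈ Finset.range k, v j / ((8:ℝ)/3)^(j+1)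
          = ∑ j ∈ Finset.range k, u j / ((8:ℝ)/3)^(j+1) := by
        refine Finset.sum_congr rfl fun j hj => ?_
        rw [hv]
        dsimp only
        rw [if_pos (Finset.mem_range.mp hj)]
      have hvkk : v k = a := by rw [hv]; simp
      rw [hsum_eq, hvkk, pow_div_eq (u k), pow_div_eq a]
      ring
  · -- no swap possible: derive that u is constant, contradiction
    exfalso
    push_neg at hswap
    have h0f : ∀ k, u k = 0 → r (k+1) < 1 := by
      intro k hk
      by_contra h
      push_neg at h
      have := hswap k 1 (by norm_num) (by rw [hk]; norm_num) (by rw [hk]; linarith)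
      rw [hk] at this
      have := hr3 (k+1)
      linarith
    have h5f : ∀ k, u k = 5 → 2 < r (k+1) := by
      intro k hk
      have := hswap k 4 (by norm_num) (by rw [hk]; norm_num)
        (by rw [hk]; have := hr0 (k+1); linarith)
      rw [hk] at this
      linarith
    have h1f : ∀ k, u k = 1 → 2 < r (k+1) ∧ r (k+1) < 3 := by
      intro k hk
      constructor
      · have := hswap k 0 (by norm_num) (by rw [hk]; norm_num)
          (by rw [hk]; have := hr0 (k+1); linarith)
        rw [hk] at this
        linarith
      · by_contra h
        push_neg at h
        have := hswap k 4 (by norm_num) (by rw [hk]; norm_num) (by rw [hk]; linarith)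
        rw [hk] at this
        have := hr3 (k+1)
        linarith
    have h4f : ∀ k, u k = 4 → 0 < r (k+1) ∧ r (k+1) < 1 := by
      intro k hk
      constructor
      · have := hswap k 1 (by norm_num) (by rw [hk]; norm_num)
          (by rw [hk]; have := hr0 (k+1); linarith)
        rw [hk] at this
        linarith
      · by_contra h
        push_neg at h
        have := hswap k 5 (by norm_num) (by rw [hk]; norm_num) (by rw [hk]; linarith)
        rw [hk] at this
        have := hr3 (k+1)
        linarith
    have hlow : ∀ m, r (m+1) < 1 → u (m+1) = 0 := by
      intro m hm
      have hrec := hrrec (m+1)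
      rcases hu (m+1) with h|h|h|h
      · exact h
      · exfalso
        have := (h1f (m+1) h).1
        rw [h] at hrec
        linarith
      · exfalso
        have := hr0 (m+2)
        rw [h] at hrec
        linarith
      · exfalso
        have := hr0 (m+2)
        rw [h] at hrec
        linarith
    have hhigh : ∀ m, 2 < r (m+1) → u (m+1) = 5 := by
      intro m hm
      have hrec := hrrec (m+1)
      rcases hu (m+1) with h|h|h|h
      · exfalso
        have := hr3 (m+2)
        rw [h] at hrec
        linarith
      · exfalso
        have := hr3 (m+2)
        rw [h] at hrec
        linarith
      · exfalso
        have := (h4f (m+1) h).2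
        rw [h] at hrec
        linarith
      · exact h
    have no1 : ∀ k, u k ≠ 1 := by
      intro k hk
      obtain ⟨ha, hb⟩ := h1f k hk
      have all5 : ∀ j, u (k + 1 + j) = 5 := by
        intro j
        induction j with
        | zero => exact hhigh k ha
        | succ j ih =>
          have h2 : 2 < r (k + 1 + j + 1) := h5f (k+1+j) ih
          exact hhigh (k+1+j) h2
      have : r (k+1) = 3 := tail_const5 (k+1) all5
      linarith
    have no4 : ∀ k, u k ≠ 4 := by
      intro k hk
      obtain ⟨ha, hb⟩ := h4f k hk
      have all0 : ∀ j, u (k + 1 + j) = 0 := by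
        intro j
        induction j with
        | zero => exact hlow k hb
        | succ j ih =>
          have h2 : r (k + 1 + j + 1) < 1 := h0f (k+1+j) ih
          exact hlow (k+1+j) h2
      have : r (k+1) = 0 := tail_const0 (k+1) all0
      linarith
    rcases hu 0 with h|h|h|h
    · apply hu0
      funext k
      induction k with
      | zero => exact h
      | succ k ih => exact hlow k (h0f k ih)
    · exact no1 0 h
    · exact no4 0 h
    · apply hu5
      funext k
      induction k with
      | zero => exact h
      | succ k ih => exact hhigh k (h5f k ih)
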